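/- Let γ be a signpost sequence, h ≥ 1 a house size, and let Q, Q' ∈ ℝ₊ⁿ be vote vectors with strictly positive entries such that Q_p > Q'_p for some party p and Q_i = Q'_i for every i ≠ p. Then for every J ∈ A_γ(Q, h) there exists J' ∈ A_γ(Q', h) such that J_p ≥ J'_p and J_i ≤ J'_i for every i ≠ p. -/

import Mathlib

open Finset

/-- A signpost sequence: `γ 0 = 0`, `γ n ∈ [n-1, n]` for `n ≥ 1`, and the
disjunction property. -/
def Signpost (γ : ℕ → ℝ) : Prop :=
  γ 0 = 0 ∧
  (∀ n : ℕ, 1 ≤ n → ((n : ℝ) - 1 ≤ γ n ∧ γ n ≤ n)) ∧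
  ((∃ k : ℕ, 2 ≤ k ∧ γ k = (k : ℝ) - 1) → ∀ l : ℕ, 1 ≤ l → γ l < l) ∧
  ((∃ k : ℕ, 1 ≤ k ∧ γ k = (k : ℝ)) → ∀ l : ℕ, 2 ≤ l → (l : ℝ) - 1 < γ l)

/-- The rounding rule `R_γ` of a signpost sequence, as a set-valued map:
`R_γ(0) = {0}`, `R_γ(t) = {n}` for `t ∈ (γ n, γ (n+1))`, and
`R_γ(t) = {n-1, n}` when `t = γ n > 0`. -/
def roundSet (γ : ℕ → ℝ) (t : ℝ) : Set ℕ :=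
  {k | (t = 0 ∧ k = 0) ∨ (γ k < t ∧ t < γ (k + 1)) ∨ (0 < t ∧ (t = γ k ∨ t = γ (k + 1)))}

/-- The divisor method solution set `A_γ(Q, h)`. -/
def divisorSet (γ : ℕ → ℝ) {n : ℕ} (Q : Fin n → ℝ) (h : ℕ) : Set (Fin n → ℕ) :=
  {S | (∑ i, S i) = h ∧ ∃ lam : ℝ, 0 < lam ∧ ∀ i, S i ∈ roundSet γ (Q i / lam)}

/-- The two candidate types. -/
inductive MType
  | f | m
deriving DecidableEq

instance : Fintype MType where
  elems := {MType.f, MType.m}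
  complete := fun x => by cases x <;> simp

/-- The other type. -/
def MType.other : MType → MType
  | .f => .m
  | .m => .f

/-- An instance of the apportionment problem with type parity: a finite candidate
set `C`, a party map, a (nonnegative real) vote map, a type map, a house size
`h ≥ 1` and a total order (the field `ord`) refining the votes. -/
structure TypedInstance (n : ℕ) (C : Type) [Fintype C] [DecidableEq C] where
  ord : LinearOrder C
  party : C → Fin n
  votes : C → ℝ
  votes_nonneg : ∀ c, 0 ≤ votes c
  mtype : C → MType
  h : ℕ
  h_pos : 1 ≤ h
  refines : ∀ c c' : C, votes c' < votes c → ord.lt c' c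

namespace TypedInstance

variable {n : ℕ} {C : Type} [Fintype C] [DecidableEq C]

/-- The candidates of party `i`. -/
def Ci (I : TypedInstance n C) (i : Fin n) : Finset C :=
  univ.filter fun c => I.party c = i

/-- The candidates of type `t`. -/
def Ct (I : TypedInstance n C) (t : MType) : Finset C :=
  univ.filter fun c => I.mtype c = t

/-- The candidates of party `i` and type `t`. -/
def Cit (I : TypedInstance n C) (i : Fin n) (t : MType) : Finset C :=
  univ.filter fun c => I.party c = i ∧ I.mtype c = t

/-- The party vote totals `Q(I)`. -/
def Q (I : TypedInstance n C) : Fin n → ℝ := fun i => ∑ c ∈ I.Ci i, I.votes c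

/-- The party × type vote totals `P(I)`. -/
def P (I : TypedInstance n C) : Fin n → MType → ℝ := fun i t => ∑ c ∈ I.Cit i t, I.votes c

/-- The supply matrix `S(I)`. -/
def S (I : TypedInstance n C) : Fin n → MType → ℕ := fun i t => (I.Cit i t).card

/-- The supply condition: `|C_i^t| ≥ ⌈h/2⌉` for every party `i` and type `t`. -/
def SupplyCond (I : TypedInstance n C) : Prop :=
  ∀ (i : Fin n) (t : MType), (I.h + 1) / 2 ≤ (I.Cit i t).card

/-- Type parity condition (A): the numbers of elected candidates of the two types
differ by exactly `h mod 2`. Allocations are represented by the finset of elected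
candidates. -/
def CondA (I : TypedInstance n C) (E : Finset C) : Prop :=
  (((E.filter fun c => I.mtype c = MType.f).card : ℤ) -
    ((E.filter fun c => I.mtype c = MType.m).card : ℤ)).natAbs = I.h % 2

instance (I : TypedInstance n C) (E : Finset C) : Decidable (I.CondA E) := by
  unfold CondA; infer_instance

/-- The number of elected candidates of each party. -/
def partyCount (I : TypedInstance n C) (E : Finset C) : Fin n → ℕ :=
  fun i => (E.filter fun c => I.party c = i).card

/-- The number of elected candidates of each type. -/
def typeCount (I : TypedInstance n C) (E : Finset C) : MType → ℕ :=
  fun t => (E.filter fun c => I.mtype c = t).card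

/-- Party proportionality condition (B) w.r.t. a signpost sequence `γ`. -/
def CondB (I : TypedInstance n C) (γ : ℕ → ℝ) (E : Finset C) : Prop :=
  ∃ J ∈ divisorSet γ I.Q I.h, ∀ i, I.partyCount E i = J i

/-- The set `X(I, γ)` of feasible allocations. -/
def X (I : TypedInstance n C) (γ : ℕ → ℝ) : Set (Finset C) :=
  {E | I.CondA E ∧ I.CondB γ E}

/-- The polytope `Z(I, J, γ)` of fractional allocations. -/
def Z (I : TypedInstance n C) (J : Fin n → ℕ) : Set (Fin n → MType → ℝ) :=
  {y | (∀ t : MType, ((I.h / 2 : ℕ) : ℝ) ≤ ∑ i, y i t) ∧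
       (∀ i : Fin n, y i MType.f + y i MType.m = (J i : ℝ)) ∧
       (∀ (i : Fin n) (t : MType), 0 ≤ y i t ∧ y i t ≤ ((I.Cit i t).card : ℝ))}

/-- The scaled instance `αI` (same candidate order). -/
def scale (I : TypedInstance n C) (α : ℝ) (hα : 0 < α) : TypedInstance n C where
  ord := I.ord
  party := I.party
  votes := fun c => α * I.votes c
  votes_nonneg := fun c => mul_nonneg hα.le (I.votes_nonneg c)
  mtype := I.mtype
  h := I.h
  h_pos := I.h_pos
  refines := fun c c' hlt => I.refines c c' (lt_of_mul_lt_mul_left hlt hα.le)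

/-- `G` is a voting increment of `I` in candidate `c`: identical to `I` except
that `c` garners strictly more votes. -/
def VotingIncrement (I G : TypedInstance n C) (c : C) : Prop :=
  G.party = I.party ∧ G.mtype = I.mtype ∧ G.h = I.h ∧
  I.votes c < G.votes c ∧ ∀ c' : C, c' ≠ c → G.votes c' = I.votes c'

/-- The rank of a candidate in the order `≻`: position `1` is the top candidate. -/
def rank (I : TypedInstance n C) (c : C) : ℕ :=
  letI := I.ord
  (univ.filter fun c' => c ≤ c').card

/-- The top `k` candidates of a subset `D` according to the order of `I`. -/
def topOf (I : TypedInstance n C) (D : Finset C) (k : ℕ) : Finset C :=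
  letI := I.ord
  D.filter fun c => (D.filter fun c' => c ≤ c').card ≤ k

/-- The type-oblivious solution `T_J`: in every party `i`, the top `J i`
candidates of `C_i` are elected. -/
def oblivious (I : TypedInstance n C) (J : Fin n → ℕ) : Finset C :=
  univ.filter fun c => c ∈ I.topOf (I.Ci (I.party c)) (J (I.party c))

/-- The over-represented type of an allocation (type `f` in case of a tie). -/
def overType (I : TypedInstance n C) (E : Finset C) : MType :=
  if I.typeCount E MType.m ≤ I.typeCount E MType.f then MType.f else MType.m

/-- One parity-correction swap: the worst-ranked elected candidate of the
over-represented type is replaced by the best-ranked unelected candidate of the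
same party and of the under-represented type (if any; otherwise nothing happens). -/
def swapStep (I : TypedInstance n C) (E : Finset C) : Finset C :=
  letI := I.ord
  let t := I.overType E
  let elected := E.filter fun c => I.mtype c = t
  if hE : elected.Nonempty then
    let s := elected.min' hE
    let pool := univ.filter fun c => c ∉ E ∧ I.party c = I.party s ∧ I.mtype c = t.other
    if hp : pool.Nonempty then insert (pool.max' hp) (E.erase s) else E
  else E

/-- The parity-correction loop (with fuel). -/
def greedyAux (I : TypedInstance n C) : ℕ → Finset C → Finset C
  | 0, E => E
  | k + 1, E => if I.CondA E then E else greedyAux I k (I.swapStep E)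

/-- The output `E_J` of the greedy & parity correction algorithm. -/
def greedy (I : TypedInstance n C) (J : Fin n → ℕ) : Finset C :=
  greedyAux I I.h (I.oblivious J)

/-- The greedy & parity correction mechanism `M^G`. -/
def MG (I : TypedInstance n C) (γ : ℕ → ℝ) : Set (Finset C) :=
  {E | ∃ J ∈ divisorSet γ I.Q I.h, E = I.greedy J}

/-- Two allocations agree on all candidates of rank at most `l`. -/
def agreeUpTo (I : TypedInstance n C) (E₁ E₂ : Finset C) (l : ℕ) : Prop :=
  ∀ c : C, I.rank c ≤ l → (c ∈ E₁ ↔ c ∈ E₂)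

instance (I : TypedInstance n C) (E₁ E₂ : Finset C) (l : ℕ) :
    Decidable (I.agreeUpTo E₁ E₂ l) := by
  unfold agreeUpTo; infer_instance

/-- The length of the common prefix of two allocations (w.r.t. the ranking). -/
def prefixLen (I : TypedInstance n C) (E₁ E₂ : Finset C) : ℕ :=
  ((Finset.range (Fintype.card C + 1)).filter fun l => I.agreeUpTo E₁ E₂ l).sup id

/-- The vote-leading type (type `f` in case of a tie; this tie-breaking rule is
scaling invariant). -/
noncomputable def voteLeading (I : TypedInstance n C) : MType :=
  if (∑ c ∈ I.Ct MType.f, I.votes c) < (∑ c ∈ I.Ct MType.m, I.votes c) then MType.m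
  else MType.f

/-- The parity marginal `φ(I)`: for even `h` both types get `h/2`; for odd `h` the
vote-leading type gets `⌈h/2⌉`. -/
noncomputable def parityMarginal (I : TypedInstance n C) : MType → ℕ :=
  fun t => if t = I.voteLeading then (I.h + 1) / 2 else I.h / 2

end TypedInstance

/-- `(x, lam, mu)` is a `δ`-biproportional solution of the two-dimensional
instance with supply `(P, S, J, φ)`. -/
def IsBipropSol (δ : ℕ → ℝ) {n : ℕ} (P : Fin n → MType → ℝ) (S : Fin n → MType → ℕ)
    (J : Fin n → ℕ) (φ : MType → ℕ) (x : Fin n → MType → ℕ)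
    (lam : Fin n → ℝ) (mu : MType → ℝ) : Prop :=
  (∀ i, 0 < lam i) ∧ (∀ t, 0 < mu t) ∧
  (∀ (i : Fin n) (t : MType), x i t < S i t → x i t ∈ roundSet δ (P i t * lam i * mu t)) ∧
  (∀ i : Fin n, x i MType.f + x i MType.m = J i) ∧
  (∀ t : MType, (∑ i, x i t) = φ t) ∧
  (∀ (i : Fin n) (t : MType), x i t ≤ S i t)

/-- The set `B_δ(P, S, J, φ)` of `δ`-biproportional solutions. -/
def bipropSet (δ : ℕ → ℝ) {n : ℕ} (P : Fin n → MType → ℝ) (S : Fin n → MType → ℕ)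
    (J : Fin n → ℕ) (φ : MType → ℕ) : Set (Fin n → MType → ℕ) :=
  {x | ∃ lam mu, IsBipropSol δ P S J φ x lam mu}

/-- `δ`-biproportional solutions of a two-dimensional instance `(P, J, φ)`
without supply bounds. -/
def IsBipropSolNS (δ : ℕ → ℝ) {n : ℕ} (P : Fin n → MType → ℝ)
    (J : Fin n → ℕ) (φ : MType → ℕ) (x : Fin n → MType → ℕ)
    (lam : Fin n → ℝ) (mu : MType → ℝ) : Prop :=
  (∀ i, 0 < lam i) ∧ (∀ t, 0 < mu t) ∧
  (∀ (i : Fin n) (t : MType), x i t ∈ roundSet δ (P i t * lam i * mu t)) ∧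
  (∀ i : Fin n, x i MType.f + x i MType.m = J i) ∧
  (∀ t : MType, (∑ i, x i t) = φ t)

/-- The set `B_δ(P, J, φ)` for instances without supply bounds. -/
def bipropSetNS (δ : ℕ → ℝ) {n : ℕ} (P : Fin n → MType → ℝ)
    (J : Fin n → ℕ) (φ : MType → ℕ) : Set (Fin n → MType → ℕ) :=
  {x | ∃ lam mu, IsBipropSolNS δ P J φ x lam mu}

/-- `F` is a fair share (matrix scaling) of the two-dimensional instance
`(P, J, φ)`. -/
def IsFairShare {n : ℕ} (P : Fin n → MType → ℝ) (J : Fin n → ℕ) (φ : MType → ℕ)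
    (F : Fin n → MType → ℝ) : Prop :=
  ∃ (lam : Fin n → ℝ) (mu : MType → ℝ),
    (∀ i, 0 < lam i) ∧ (∀ t, 0 < mu t) ∧ (∀ i t, 0 < F i t) ∧
    (∀ (i : Fin n) (t : MType), F i t = P i t * lam i * mu t) ∧
    (∀ i : Fin n, F i MType.f + F i MType.m = (J i : ℝ)) ∧
    (∀ t : MType, (∑ i, F i t) = (φ t : ℝ))

namespace TypedInstance

variable {n : ℕ} {C : Type} [Fintype C] [DecidableEq C]

/-- The allocation `E_x` electing, for every party `i` and type `t`, the top
`x i t` candidates of `C_i^t`. -/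
def allocOf (I : TypedInstance n C) (x : Fin n → MType → ℕ) : Finset C :=
  univ.filter fun c =>
    c ∈ I.topOf (I.Cit (I.party c) (I.mtype c)) (x (I.party c) (I.mtype c))

/-- The `δ`-biproportional parity mechanism `M^B_δ`. -/
def MB (I : TypedInstance n C) (δ γ : ℕ → ℝ) : Set (Finset C) :=
  {E | ∃ J ∈ divisorSet γ I.Q I.h,
        ∃ x ∈ bipropSet δ I.P I.S J I.parityMarginal, E = I.allocOf x}

end TypedInstance
section helpers

variable {γ : ℕ → ℝ}

lemma sp_nonneg (hγ : Signpost γ) (k : ℕ) : 0 ≤ γ k := by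
  rcases k with _ | m
  · rw [hγ.1]
  · have h1 := (hγ.2.1 (m + 1) (by omega)).1
    push_cast at h1
    linarith

lemma sp_mono (hγ : Signpost γ) : Monotone γ := by
  apply monotone_nat_of_le_succ
  intro k
  rcases k with _ | m
  · rw [hγ.1]; exact sp_nonneg hγ 1
  · have h1 := (hγ.2.1 (m + 1) (by omega)).2
    have h2 := (hγ.2.1 (m + 2) (by omega)).1
    push_cast at h1 h2
    linarith

noncomputable def upF (γ : ℕ → ℝ) (t : ℝ) : ℕ := sSup {k | γ k ≤ t}

noncomputable def lowF (γ : ℕ → ℝ) (t : ℝ) : ℕ := sInf {k | t ≤ γ (k + 1)}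

lemma upF_bdd (hγ : Signpost γ) (t : ℝ) : BddAbove {k | γ k ≤ t} := by
  refine ⟨⌊t⌋₊ + 1, fun k hk => ?_⟩
  simp only [Set.mem_setOf_eq] at hk
  by_contra hc
  push_neg at hc
  have hk2 : (⌊t⌋₊ + 2 : ℕ) ≤ k := by omega
  have h1 := (hγ.2.1 k (by omega)).1
  have h2 : t < (⌊t⌋₊ : ℝ) + 1 := Nat.lt_floor_add_one t
  have h3 : ((⌊t⌋₊ + 2 : ℕ) : ℝ) ≤ (k : ℝ) := by exact_mod_cast hk2
  push_cast at h3
  linarith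

lemma upF_mem (hγ : Signpost γ) {t : ℝ} (ht : 0 ≤ t) : γ (upF γ t) ≤ t := by
  have h0 : (0 : ℕ) ∈ {k | γ k ≤ t} := by simp [Set.mem_setOf_eq, hγ.1, ht]
  exact Nat.sSup_mem ⟨0, h0⟩ (upF_bdd hγ t)

lemma le_upF (hγ : Signpost γ) {t : ℝ} {k : ℕ} (hk : γ k ≤ t) : k ≤ upF γ t :=
  le_csSup (upF_bdd hγ t) hk

lemma upF_lt (hγ : Signpost γ) {t : ℝ} (ht : 0 ≤ t) : t < γ (upF γ t + 1) := by
  by_contra hc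
  push_neg at hc
  have := le_upF hγ hc
  omega

lemma lowF_mem (hγ : Signpost γ) (t : ℝ) : t ≤ γ (lowF γ t + 1) := by
  have hne : Set.Nonempty {k | t ≤ γ (k + 1)} := by
    refine ⟨⌈t⌉₊, ?_⟩
    have h1 := (hγ.2.1 (⌈t⌉₊ + 1) (by omega)).1
    have h2 : t ≤ (⌈t⌉₊ : ℝ) := Nat.le_ceil t
    push_cast at h1
    simp only [Set.mem_setOf_eq]
    linarith
  exact Nat.sInf_mem hne

lemma lowF_le (hγ : Signpost γ) {t : ℝ} {k : ℕ} (hk : t ≤ γ (k + 1)) : lowF γ t ≤ k :=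
  Nat.sInf_le hk

lemma lowF_le_upF (hγ : Signpost γ) {t : ℝ} (ht : 0 ≤ t) : lowF γ t ≤ upF γ t :=
  lowF_le hγ (upF_lt hγ ht).le

lemma upF_mono (hγ : Signpost γ) {t t' : ℝ} (h0 : 0 ≤ t) (htt : t ≤ t') :
    upF γ t ≤ upF γ t' :=
  le_upF hγ ((upF_mem hγ h0).trans htt)

lemma lowF_mono (hγ : Signpost γ) {t t' : ℝ} (htt : t ≤ t') :
    lowF γ t ≤ lowF γ t' :=
  lowF_le hγ (htt.trans (lowF_mem hγ t'))

lemma mem_roundSet_of (hγ : Signpost γ) {t : ℝ} (ht : 0 < t) {k : ℕ}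
    (h1 : lowF γ t ≤ k) (h2 : k ≤ upF γ t) : k ∈ roundSet γ t := by
  have hle : γ k ≤ t := (sp_mono hγ h2).trans (upF_mem hγ ht.le)
  have hge : t ≤ γ (k + 1) := (lowF_mem hγ t).trans (sp_mono hγ (by omega))
  rcases eq_or_lt_of_le hle with h1' | h1'
  · exact Or.inr (Or.inr ⟨ht, Or.inl h1'.symm⟩)
  · rcases eq_or_lt_of_le hge with h2' | h2'
    · exact Or.inr (Or.inr ⟨ht, Or.inr h2'⟩)
    · exact Or.inr (Or.inl ⟨h1', h2'⟩)

lemma roundSet_bounds (hγ : Signpost γ) {t : ℝ} (ht : 0 < t) {k : ℕ}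
    (hk : k ∈ roundSet γ t) : γ k ≤ t ∧ t ≤ γ (k + 1) := by
  have hmono : γ k ≤ γ (k + 1) := sp_mono hγ (by omega)
  rcases hk with ⟨h0, _⟩ | ⟨ha, hb⟩ | ⟨_, hc | hc⟩
  · exact absurd h0 ht.ne'
  · exact ⟨ha.le, hb.le⟩
  · exact ⟨hc.ge, hc.le.trans hmono⟩
  · exact ⟨le_trans hmono hc.ge, hc.le⟩

lemma exists_sum_eq {m : ℕ} (b : Fin m → ℕ) (h : ℕ) (h2 : h ≤ ∑ i, b i) :
    ∀ (d : ℕ) (a : Fin m → ℕ), (∀ i, a i ≤ b i) → (∑ i, a i ≤ h) →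
      d = h - ∑ i, a i →
      ∃ c : Fin m → ℕ, (∀ i, a i ≤ c i ∧ c i ≤ b i) ∧ ∑ i, c i = h := by
  intro d
  induction d with
  | zero =>
    intro a hab h1 hd
    have : ∑ i, a i = h := by omega
    exact ⟨a, fun i => ⟨le_refl _, hab i⟩, this⟩
  | succ d ih =>
    intro a hab h1 hd
    have hlt : ∑ i, a i < h := by omega
    have hex : ∃ i, a i < b i := by
      by_contra hc
      push_neg at hc
      have : ∑ i, b i ≤ ∑ i, a i := Finset.sum_le_sum fun i _ => hc i
      omega
    obtain ⟨i, hi⟩ := hex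
    set a' := Function.update a i (a i + 1) with ha'
    have hsum' : ∑ j, a' j = ∑ j, a j + 1 := by
      rw [ha', Finset.sum_update_of_mem (Finset.mem_univ i), ← Finset.erase_eq]
      have := Finset.add_sum_erase Finset.univ a (Finset.mem_univ i)
      omega
    have hab' : ∀ j, a' j ≤ b j := by
      intro j
      rcases eq_or_ne j i with rfl | hji
      · simpa [ha'] using hi
      · simpa [ha', Function.update_of_ne hji] using hab j
    obtain ⟨c, hc1, hc2⟩ := ih a' hab' (by omega) (by omega)
    refine ⟨c, fun j => ⟨?_, (hc1 j).2⟩, hc2⟩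
    have := (hc1 j).1
    rcases eq_or_ne j i with rfl | hji
    · simp [ha'] at this; omega
    · simpa [ha', Function.update_of_ne hji] using this

end helpers

set_option maxHeartbeats 1000000 in
/-- strong vote monotonicity of divisor methods. -/
theorem stmt2 (γ : ℕ → ℝ) (hγ : Signpost γ) (n : ℕ) (h : ℕ) (hh : 1 ≤ h)
    (Q Q' : Fin n → ℝ) (hQ : ∀ i, 0 < Q i) (hQ' : ∀ i, 0 < Q' i)
    (p : Fin n) (hp : Q' p < Q p) (hoth : ∀ i, i ≠ p → Q i = Q' i)
    (J : Fin n → ℕ) (hJ : J ∈ divisorSet γ Q h) :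
    ∃ J' ∈ divisorSet γ Q' h, J' p ≤ J p ∧ ∀ i, i ≠ p → J i ≤ J' i := by
  classical
  obtain ⟨hsum, lam, hlam, hmem⟩ := hJ
  have hn : 0 < n := by
    rcases Nat.eq_zero_or_pos n with rfl | hn
    · simp at hsum; omega
    · exact hn
  have hQpos : ∀ i, 0 < Q i / lam := fun i => div_pos (hQ i) hlam
  have hbounds : ∀ i, γ (J i) ≤ Q i / lam ∧ Q i / lam ≤ γ (J i + 1) :=
    fun i => roundSet_bounds hγ (hQpos i) (hmem i)
  have hJup : ∀ i, J i ≤ upF γ (Q i / lam) := fun i => le_upF hγ (hbounds i).1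
  have hJlow : ∀ i, lowF γ (Q i / lam) ≤ J i := fun i => lowF_le hγ (hbounds i).2
  have hJple : J p ≤ h := by
    rw [← hsum]
    exact Finset.single_le_sum (fun i _ => Nat.zero_le _) (Finset.mem_univ p)
  -- monotonicity of thresholds in the multiplier
  have hdivmono : ∀ (i : Fin n) {μ ν : ℝ}, 0 < μ → μ ≤ ν → Q' i / ν ≤ Q' i / μ := by
    intro i μ ν hμ hν
    gcongr
    exact (hQ' i).le
  have hBmono : ∀ {μ ν : ℝ}, 0 < μ → μ ≤ ν → ∀ i,
      upF γ (Q' i / ν) ≤ upF γ (Q' i / μ) := by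
    intro μ ν hμ hν i
    exact upF_mono hγ (div_pos (hQ' i) (hμ.trans_le hν)).le (hdivmono i hμ hν)
  have hAmono : ∀ {μ ν : ℝ}, 0 < μ → μ ≤ ν → ∀ i,
      lowF γ (Q' i / ν) ≤ lowF γ (Q' i / μ) := by
    intro μ ν hμ hν i
    exact lowF_mono hγ (hdivmono i hμ hν)
  have hQ'le : ∀ i, Q' i / lam ≤ Q i / lam := by
    intro i
    rcases eq_or_ne i p with rfl | hne
    · exact (div_le_div_iff_of_pos_right hlam).mpr hp.le
    · rw [hoth i hne]
  have hJBlam : ∀ i, i ≠ p → J i ≤ upF γ (Q' i / lam) := by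
    intro i hne
    rw [← hoth i hne]
    exact hJup i
  have hAlam : ∀ i, lowF γ (Q' i / lam) ≤ J i := fun i =>
    le_trans (lowF_mono hγ (hQ'le i)) (hJlow i)
  -- the candidate multiplier mubar
  have hFinNe : (Finset.univ : Finset (Fin n)).Nonempty := ⟨p, Finset.mem_univ p⟩
  set m0 : ℝ := ((Finset.univ : Finset (Fin n)).image fun i => Q' i / γ h).min'
    (hFinNe.image _) with hm0def
  set mubar : ℝ := if 0 < γ h then min lam m0 else lam with hmubardef
  have hm0mem : ∃ j : Fin n, Q' j / γ h = m0 := by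
    obtain ⟨j, -, hj⟩ := Finset.mem_image.mp (Finset.min'_mem _ (hFinNe.image fun i => Q' i / γ h))
    exact ⟨j, hj⟩
  have hmubar_pos : 0 < mubar := by
    rw [hmubardef]
    split_ifs with hgh
    · obtain ⟨j, hj⟩ := hm0mem
      exact lt_min hlam (hj ▸ div_pos (hQ' j) hgh)
    · exact hlam
  have hmubar_le : mubar ≤ lam := by
    rw [hmubardef]; split_ifs
    · exact min_le_left _ _
    · exact le_refl _
  have hBbar : ∀ i, h ≤ upF γ (Q' i / mubar) := by
    intro i
    by_cases hgh : 0 < γ h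
    · have hm0le : m0 ≤ Q' i / γ h :=
        Finset.min'_le _ _ (Finset.mem_image_of_mem _ (Finset.mem_univ i))
      have hmu : mubar ≤ Q' i / γ h := by
        rw [hmubardef, if_pos hgh]
        exact (min_le_right _ _).trans hm0le
      have h1 : mubar * γ h ≤ Q' i := (le_div_iff₀ hgh).mp hmu
      have h2 : γ h ≤ Q' i / mubar := (le_div_iff₀ hmubar_pos).mpr (by linarith)
      exact le_upF hγ h2
    · have hgh0 : γ h = 0 := le_antisymm (not_lt.mp hgh) (sp_nonneg hγ h)
      have hh1 : h = 1 := by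
        have h1 := (hγ.2.1 h hh).1
        rw [hgh0] at h1
        have h2 : (h : ℝ) ≤ 1 := by linarith
        have h3 : h ≤ 1 := by exact_mod_cast h2
        omega
      have hmueq : mubar = lam := by rw [hmubardef, if_neg hgh]
      have : γ 1 ≤ Q' i / mubar := by
        rw [← hh1, hgh0]
        exact (div_pos (hQ' i) hmubar_pos).le
      rw [hh1]
      exact le_upF hγ this
  -- global bound N and the finite set of thresholds D
  set Mq : ℝ := (Finset.univ.image Q').max' (hFinNe.image _) with hMqdef
  have hMqle : ∀ i, Q' i ≤ Mq := fun i =>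
    Finset.le_max' _ _ (Finset.mem_image_of_mem _ (Finset.mem_univ i))
  have hMqpos : 0 < Mq := lt_of_lt_of_le (hQ' ⟨0, hn⟩) (hMqle ⟨0, hn⟩)
  set N : ℕ := max (h + 1) (⌊Mq / mubar⌋₊ + 2) with hNdef
  have hNh : h + 1 ≤ N := le_max_left _ _
  have hNfl : ⌊Mq / mubar⌋₊ + 2 ≤ N := le_max_right _ _
  set D : Finset ℝ := insert lam ((Finset.univ : Finset (Fin n × Fin N)).image
    fun ik => Q' ik.1 / γ (ik.2.1 + 1)) with hDdef
  have hDq : ∀ (i : Fin n) (k : ℕ), 1 ≤ k → k ≤ N → Q' i / γ k ∈ D := by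
    intro i k h1 h2
    rw [hDdef]
    apply Finset.mem_insert_of_mem
    apply Finset.mem_image.mpr
    refine ⟨(i, ⟨k - 1, by omega⟩), Finset.mem_univ _, ?_⟩
    have : k - 1 + 1 = k := by omega
    simp only [this]
  have hlamD : lam ∈ D := by rw [hDdef]; exact Finset.mem_insert_self _ _
  set Sb : ℝ → ℕ := fun μ =>
    ∑ i, (if i = p then min (upF γ (Q' i / μ)) (J p) else upF γ (Q' i / μ)) with hSbdef
  set Sa : ℝ → ℕ := fun μ =>
    ∑ i, (if i = p then lowF γ (Q' i / μ) else max (lowF γ (Q' i / μ)) (J i)) with hSadef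
  set D' : Finset ℝ := D.filter (fun μ => 0 < μ ∧ μ ≤ lam ∧ h ≤ Sb μ) with hD'def
  have hmubarD : mubar ∈ D := by
    rw [hmubardef]
    split_ifs with hgh
    · rcases le_total lam m0 with hcase | hcase
      · rw [min_eq_left hcase]; exact hlamD
      · rw [min_eq_right hcase]
        obtain ⟨j, hj⟩ := hm0mem
        rw [← hj]
        exact hDq j h hh (by omega)
    · exact hlamD
  have hSbmubar : h ≤ Sb mubar := by
    have hterm : ∀ j : Fin n,
        (if j = p then min (upF γ (Q' j / mubar)) (J p) else upF γ (Q' j / mubar)) ≤ Sb mubar := by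
      intro j
      rw [hSbdef]
      exact Finset.single_le_sum (f := fun i =>
        (if i = p then min (upF γ (Q' i / mubar)) (J p) else upF γ (Q' i / mubar)))
        (fun i _ => Nat.zero_le _) (Finset.mem_univ j)
    rcases Nat.lt_or_ge n 2 with hn2 | hn2
    · -- n = 1
      have hnp : ∀ j : Fin n, j = p := by
        intro j
        apply Fin.ext
        have := j.isLt
        have := p.isLt
        omega
      have hJp : J p = h := by
        rw [← hsum]
        rw [Finset.sum_eq_single p (fun b _ hb => absurd (hnp b) hb)
          (fun hb => absurd (Finset.mem_univ p) hb)]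
      have h1 : h ≤ min (upF γ (Q' p / mubar)) (J p) := le_min (hBbar p) hJp.ge
      have h2 := hterm p
      rw [if_pos rfl] at h2
      omega
    · obtain ⟨j, hj⟩ := Fintype.exists_ne_of_one_lt_card (by simp; omega) p
      have h2 := hterm j
      rw [if_neg hj] at h2
      exact le_trans (hBbar j) h2
  have hD'ne : D'.Nonempty :=
    ⟨mubar, by rw [hD'def]; exact Finset.mem_filter.mpr ⟨hmubarD, hmubar_pos, hmubar_le, hSbmubar⟩⟩
  set mustar : ℝ := D'.max' hD'ne with hmustardef
  have hmustar_mem : mustar ∈ D' := D'.max'_mem hD'ne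
  have hmustar_spec := Finset.mem_filter.mp (by rw [hD'def] at hmustar_mem; exact hmustar_mem)
  have hmupos : 0 < mustar := hmustar_spec.2.1
  have hmule : mustar ≤ lam := hmustar_spec.2.2.1
  have hmuSb : h ≤ Sb mustar := hmustar_spec.2.2.2
  have hmumax : ∀ μ ∈ D', μ ≤ mustar := fun μ hμ => Finset.le_max' D' μ hμ
  have hmubar_le_star : mubar ≤ mustar := hmumax mubar (by
    rw [hD'def]; exact Finset.mem_filter.mpr ⟨hmubarD, hmubar_pos, hmubar_le, hSbmubar⟩)
  -- KEY 1 : lowF at p is at most J p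
  have hKey1 : lowF γ (Q' p / mustar) ≤ J p := by
    by_contra hc
    push_neg at hc
    have hnle : γ (J p + 1) < Q' p / mustar := by
      by_contra hle
      push_neg at hle
      exact absurd (lowF_le hγ hle) (by omega)
    have hγpos : 0 < γ (J p + 1) := lt_of_lt_of_le (hQpos p) (hbounds p).2
    set ρ : ℝ := Q' p / γ (J p + 1) with hρdef
    have hρpos : 0 < ρ := div_pos (hQ' p) hγpos
    have hmultρ : mustar < ρ := by
      rw [hρdef, lt_div_iff₀ hγpos]
      have h2 : γ (J p + 1) * mustar < Q' p := (lt_div_iff₀ hmupos).mp hnle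
      linarith [mul_comm mustar (γ (J p + 1)), h2]
    have hρlam : ρ < lam := by
      rw [hρdef, div_lt_iff₀ hγpos]
      have h1 : Q p ≤ γ (J p + 1) * lam := (div_le_iff₀ hlam).mp (hbounds p).2
      have h2 : Q p ≤ lam * γ (J p + 1) := by linarith [mul_comm lam (γ (J p + 1))]
      linarith
    have hρD : ρ ∈ D := hDq p (J p + 1) (by omega) (by omega)
    have hρnotD' : ρ ∉ D' := fun hmem2 => absurd (hmumax ρ hmem2) (not_le.mpr hmultρ)
    apply hρnotD'
    rw [hD'def]
    refine Finset.mem_filter.mpr ⟨hρD, hρpos, hρlam.le, ?_⟩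
    rw [hSbdef, ← hsum]
    apply Finset.sum_le_sum
    intro i _
    by_cases hip : i = p
    · subst hip
      rw [if_pos rfl]
      have hQρ : Q' i / ρ = γ (J i + 1) := by
        rw [hρdef]
        field_simp
        exact div_self (hQ' i).ne'
      have h3 : J i + 1 ≤ upF γ (Q' i / ρ) := by
        rw [hQρ]
        exact le_upF hγ le_rfl
      exact le_min (by omega) le_rfl
    · rw [if_neg hip]
      exact le_trans (hJBlam i hip) (hBmono hρpos hρlam.le i)
  -- Sa at lam
  have hSalam : Sa lam ≤ h := by
    rw [hSadef, ← hsum]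
    apply Finset.sum_le_sum
    intro i _
    by_cases hip : i = p
    · subst hip; rw [if_pos rfl]; exact hAlam i
    · rw [if_neg hip]; exact max_le (hAlam i) le_rfl
  -- KEY 2 : Sa mustar ≤ h
  have hKey2 : Sa mustar ≤ h := by
    by_contra hc
    push_neg at hc
    have hmult : mustar < lam := by
      rcases lt_or_eq_of_le hmule with hlt | heq
      · exact hlt
      · rw [heq] at hc; omega
    have hfil_ne : (D.filter (fun q => mustar < q)).Nonempty :=
      ⟨lam, Finset.mem_filter.mpr ⟨hlamD, hmult⟩⟩
    set mu2 : ℝ := (D.filter (fun q => mustar < q)).min' hfil_ne with hmu2def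
    have hmu2mem := Finset.mem_filter.mp ((D.filter (fun q => mustar < q)).min'_mem hfil_ne)
    have hmu2gt : mustar < mu2 := hmu2mem.2
    have hmu2pos : 0 < mu2 := hmupos.trans hmu2gt
    have hmu2lam : mu2 ≤ lam :=
      Finset.min'_le _ _ (Finset.mem_filter.mpr ⟨hlamD, hmult⟩)
    have hmu2min : ∀ q ∈ D, mustar < q → mu2 ≤ q := fun q hq hgt =>
      Finset.min'_le _ _ (Finset.mem_filter.mpr ⟨hq, hgt⟩)
    have himp : ∀ (i : Fin n) (k : ℕ), mustar * γ k < Q' i → mu2 * γ k ≤ Q' i := by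
      intro i k hk
      rcases eq_or_lt_of_le (sp_nonneg hγ k) with hz | hz
      · rw [← hz, mul_zero]; exact (hQ' i).le
      · have hk1 : 1 ≤ k := by
          rcases Nat.eq_zero_or_pos k with rfl | h1
          · rw [hγ.1] at hz; exact absurd hz (lt_irrefl 0)
          · omega
        rcases le_or_gt k N with hkN | hkN
        · have hqD : Q' i / γ k ∈ D := hDq i k hk1 hkN
          have hqgt : mustar < Q' i / γ k := (lt_div_iff₀ hz).mpr hk
          have h5 := hmu2min _ hqD hqgt
          exact (le_div_iff₀ hz).mp h5
        · exfalso
          have h1 := (hγ.2.1 k (by omega)).1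
          have h2 : Mq / mubar < (⌊Mq / mubar⌋₊ : ℝ) + 1 := Nat.lt_floor_add_one _
          have h3 : ((⌊Mq / mubar⌋₊ + 2 : ℕ) : ℝ) ≤ (N : ℝ) := by exact_mod_cast hNfl
          have h4 : (N : ℝ) + 1 ≤ (k : ℝ) := by exact_mod_cast hkN
          have h5 : Mq / mubar < γ k := by push_cast at h3 ⊢; linarith
          have h6 : Q' i / mustar ≤ Mq / mubar :=
            div_le_div₀ hMqpos.le (hMqle i) hmubar_pos hmubar_le_star
          have h7 : Q' i / mustar < γ k := lt_of_le_of_lt h6 h5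
          have h8 : Q' i < γ k * mustar := (div_lt_iff₀ hmupos).mp h7
          linarith [mul_comm mustar (γ k)]
    have hAB : ∀ i, lowF γ (Q' i / mustar) ≤ upF γ (Q' i / mu2) := by
      intro i
      have h1 : Q' i / mu2 < γ (upF γ (Q' i / mu2) + 1) :=
        upF_lt hγ (div_pos (hQ' i) hmu2pos).le
      have h2 : Q' i < γ (upF γ (Q' i / mu2) + 1) * mu2 := (div_lt_iff₀ hmu2pos).mp h1
      have h3 : ¬ (mustar * γ (upF γ (Q' i / mu2) + 1) < Q' i) := by
        intro hcon
        have := himp i _ hcon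
        linarith [mul_comm mu2 (γ (upF γ (Q' i / mu2) + 1))]
      push_neg at h3
      have h4 : Q' i / mustar ≤ γ (upF γ (Q' i / mu2) + 1) := by
        rw [div_le_iff₀ hmupos]
        linarith [mul_comm mustar (γ (upF γ (Q' i / mu2) + 1))]
      exact lowF_le hγ h4
    have hSb2 : h ≤ Sb mu2 := by
      refine le_trans (le_of_lt hc) ?_
      rw [hSadef, hSbdef]
      apply Finset.sum_le_sum
      intro i _
      by_cases hip : i = p
      · subst hip
        rw [if_pos rfl, if_pos rfl]
        exact le_min (hAB i) hKey1
      · rw [if_neg hip, if_neg hip]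
        exact max_le (hAB i) (le_trans (hJBlam i hip) (hBmono hmu2pos hmu2lam i))
    have : mu2 ∈ D' := by
      rw [hD'def]
      exact Finset.mem_filter.mpr ⟨hmu2mem.1, hmu2pos, hmu2lam, hSb2⟩
    exact absurd (hmumax mu2 this) (not_le.mpr hmu2gt)
  -- Selection of J'
  set bfun : Fin n → ℕ := fun i =>
    if i = p then min (upF γ (Q' i / mustar)) (J p) else upF γ (Q' i / mustar) with hbfundef
  set afun : Fin n → ℕ := fun i =>
    if i = p then lowF γ (Q' i / mustar) else max (lowF γ (Q' i / mustar)) (J i) with hafundef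
  have hab : ∀ i, afun i ≤ bfun i := by
    intro i
    rw [hafundef, hbfundef]
    have hlu : lowF γ (Q' i / mustar) ≤ upF γ (Q' i / mustar) :=
      lowF_le_upF hγ (div_pos (hQ' i) hmupos).le
    by_cases hip : i = p
    · subst hip
      simp only [if_pos rfl]
      exact le_min hlu hKey1
    · simp only [if_neg hip]
      exact max_le hlu (le_trans (hJBlam i hip) (hBmono hmupos hmule i))
  have hsb : h ≤ ∑ i, bfun i := by rw [hbfundef]; exact hmuSb
  have hsa : ∑ i, afun i ≤ h := by rw [hafundef]; exact hKey2
  obtain ⟨c, hc1, hc2⟩ := exists_sum_eq bfun h hsb (h - ∑ i, afun i) afun hab hsa rfl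
  refine ⟨c, ⟨hc2, mustar, hmupos, fun i => ?_⟩, ?_, ?_⟩
  · apply mem_roundSet_of hγ (div_pos (hQ' i) hmupos)
    · refine le_trans ?_ (hc1 i).1
      rw [hafundef]
      by_cases hip : i = p
      · subst hip; simp only [if_pos rfl]; exact le_refl _
      · simp only [if_neg hip]; exact le_max_left _ _
    · refine le_trans (hc1 i).2 ?_
      rw [hbfundef]
      by_cases hip : i = p
      · subst hip; simp only [if_pos rfl]; exact min_le_left _ _
      · simp only [if_neg hip]; exact le_refl _
  · refine le_trans (hc1 p).2 ?_
    rw [hbfundef]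
    simp only [if_pos rfl]
    exact min_le_right _ _
  · intro i hip
    refine le_trans ?_ (hc1 i).1
    rw [hafundef]
    simp only [if_neg hip]
    exact le_max_right _ _
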